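/- Let ν ≥ 1 be an integer, K ⊂ ℝ^ν compact, m ∈ ℝ and σ > 0. Let p, q : K × (ℝ^ν ∖ {0}) → ℂ be continuous, positively homogeneous in the second variable of degrees m and m − σ respectively (p(y,λη) = λ^m p(y,η) and q(y,λη) = λ^{m−σ} q(y,η) for λ > 0). Assume that for every (y₀, ω₀) ∈ K × S^{ν−1} with p(y₀,ω₀) = 0 there exist a relatively open neighborhood U of (y₀,ω₀) in K × S^{ν−1} and a constant c > 0 such that for all (y,ω) ∈ U: |q(y,ω)|² ≥ c and −Re( p(y,ω)·conj(q(y,ω)) ) ≤ |p(y,ω)| · √(|q(y,ω)|² − c). Then there exist c' > 0 and R ≥ 1 such that |p(y,η) + q(y,η)| ≥ c' |η|^{m−σ} for all y ∈ K and all η ∈ ℝ^ν with |η| ≥ R. -/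

import Mathlib

/-- Let `ν ≥ 1` be an integer, `K ⊂ ℝ^ν` compact, `m ∈ ℝ` and `σ > 0`. Let
`p, q` be continuous on `K × (ℝ^ν ∖ {0})`, positively homogeneous in the second variable of
degrees `m` and `m − σ` respectively. Assume that for every `(y₀, ω₀) ∈ K × S^{ν−1}` with
`p(y₀,ω₀) = 0` there exist a relatively open neighborhood `U` of `(y₀,ω₀)` in `K × S^{ν−1}`
and a constant `c > 0` such that for all `(y,ω) ∈ U`: `|q(y,ω)|² ≥ c` and
`−Re( p(y,ω)·conj(q(y,ω)) ) ≤ |p(y,ω)| · √(|q(y,ω)|² − c)`. Then there exist `c' > 0` and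
`R ≥ 1` such that `|p(y,η) + q(y,η)| ≥ c' |η|^(m−σ)` for all `y ∈ K` and all `η` with
`|η| ≥ R`. -/
theorem stmt_16 (ν : ℕ) (hν : 1 ≤ ν) (K : Set (EuclideanSpace ℝ (Fin ν))) (hK : IsCompact K)
    (m σ : ℝ) (hσ : 0 < σ)
    (p q : EuclideanSpace ℝ (Fin ν) → EuclideanSpace ℝ (Fin ν) → ℂ)
    (hp : ContinuousOn (fun yz : EuclideanSpace ℝ (Fin ν) × EuclideanSpace ℝ (Fin ν) =>
      p yz.1 yz.2) (K ×ˢ {η | η ≠ 0}))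
    (hq : ContinuousOn (fun yz : EuclideanSpace ℝ (Fin ν) × EuclideanSpace ℝ (Fin ν) =>
      q yz.1 yz.2) (K ×ˢ {η | η ≠ 0}))
    (hphom : ∀ y ∈ K, ∀ η : EuclideanSpace ℝ (Fin ν), η ≠ 0 → ∀ l : ℝ, 0 < l →
      p y (l • η) = ((l ^ m : ℝ) : ℂ) * p y η)
    (hqhom : ∀ y ∈ K, ∀ η : EuclideanSpace ℝ (Fin ν), η ≠ 0 → ∀ l : ℝ, 0 < l →
      q y (l • η) = ((l ^ (m - σ) : ℝ) : ℂ) * q y η)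
    (hmain : ∀ y₀ ∈ K, ∀ ω₀ : EuclideanSpace ℝ (Fin ν), ‖ω₀‖ = 1 → p y₀ ω₀ = 0 →
      ∃ V : Set (EuclideanSpace ℝ (Fin ν) × EuclideanSpace ℝ (Fin ν)),
        IsOpen V ∧ (y₀, ω₀) ∈ V ∧ ∃ c > (0 : ℝ),
          ∀ y ∈ K, ∀ ω : EuclideanSpace ℝ (Fin ν), ‖ω‖ = 1 → (y, ω) ∈ V →
            c ≤ ‖q y ω‖ ^ 2 ∧
            -((p y ω * (starRingEnd ℂ) (q y ω)).re)
              ≤ ‖p y ω‖ * Real.sqrt (‖q y ω‖ ^ 2 - c)) :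
    ∃ c' > (0 : ℝ), ∃ R : ℝ, 1 ≤ R ∧ ∀ y ∈ K, ∀ η : EuclideanSpace ℝ (Fin ν), R ≤ ‖η‖ →
      c' * ‖η‖ ^ (m - σ) ≤ ‖p y η + q y η‖ := by
  classical
  set S : Set (EuclideanSpace ℝ (Fin ν) × EuclideanSpace ℝ (Fin ν)) :=
    K ×ˢ Metric.sphere 0 1 with hSdef
  have hScomp : IsCompact S := hK.prod (isCompact_sphere 0 1)
  -- key local estimate
  have key : ∀ x ∈ S, ∃ U : Set (EuclideanSpace ℝ (Fin ν) × EuclideanSpace ℝ (Fin ν)),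
      U ∈ nhds x ∧ ∃ c : ℝ, 0 < c ∧ ∃ R : ℝ, 1 ≤ R ∧
      ∀ y ∈ K, ∀ ω : EuclideanSpace ℝ (Fin ν), ‖ω‖ = 1 → (y, ω) ∈ U →
        ∀ l : ℝ, R ≤ l → c ≤ ‖((l ^ σ : ℝ) : ℂ) * p y ω + q y ω‖ := by
    rintro ⟨y₀, ω₀⟩ hx
    have hy₀ : y₀ ∈ K := hx.1
    have hω₀ : ‖ω₀‖ = 1 := by
      have := hx.2
      simpa [mem_sphere_zero_iff_norm] using this
    by_cases hp0 : p y₀ ω₀ = 0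
    · obtain ⟨V, hVopen, hVmem, c, hc, hprop⟩ := hmain y₀ hy₀ ω₀ hω₀ hp0
      refine ⟨V, hVopen.mem_nhds hVmem, Real.sqrt c, Real.sqrt_pos.mpr hc, 1, le_refl 1, ?_⟩
      intro y hy ω hω hωV l hl
      obtain ⟨h1, h2⟩ := hprop y hy ω hω hωV
      have hl0 : (0:ℝ) < l := lt_of_lt_of_le one_pos hl
      set a : ℝ := l ^ σ with ha
      have ha0 : 0 ≤ a := (Real.rpow_pos_of_pos hl0 σ).le
      set b : ℝ := Real.sqrt (‖q y ω‖ ^ 2 - c) with hb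
      have hb0 : 0 ≤ b := Real.sqrt_nonneg _
      have hb2 : b ^ 2 = ‖q y ω‖ ^ 2 - c := Real.sq_sqrt (by linarith)
      have hexp : ‖((a : ℝ) : ℂ) * p y ω + q y ω‖ ^ 2
          = a ^ 2 * ‖p y ω‖ ^ 2
            + 2 * a * (p y ω * (starRingEnd ℂ) (q y ω)).re
            + ‖q y ω‖ ^ 2 := by
        rw [Complex.sq_norm, Complex.normSq_add, Complex.normSq_mul, Complex.normSq_ofReal,
          Complex.sq_norm, Complex.sq_norm]
        have : (((a : ℝ) : ℂ) * p y ω * (starRingEnd ℂ) (q y ω)).re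
            = a * (p y ω * (starRingEnd ℂ) (q y ω)).re := by
          rw [mul_assoc]
          simp [Complex.re_ofReal_mul]
        rw [this]; ring
      have hsq : c ≤ ‖((a : ℝ) : ℂ) * p y ω + q y ω‖ ^ 2 := by
        rw [hexp]
        have hPnn : 0 ≤ ‖p y ω‖ := norm_nonneg _
        have h2' : 0 ≤ (p y ω * (starRingEnd ℂ) (q y ω)).re
            + ‖p y ω‖ * b := by linarith
        nlinarith [sq_nonneg (a * ‖p y ω‖ - b),
          mul_nonneg (by linarith : (0:ℝ) ≤ 2 * a) h2']
      calc Real.sqrt c ≤ Real.sqrt (‖((a : ℝ) : ℂ) * p y ω + q y ω‖ ^ 2) :=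
            Real.sqrt_le_sqrt hsq
        _ = ‖((a : ℝ) : ℂ) * p y ω + q y ω‖ :=
            Real.sqrt_sq (norm_nonneg _)
    · have hω₀0 : ω₀ ≠ 0 := by
        intro h; rw [h, norm_zero] at hω₀; norm_num at hω₀
      have hmem : (y₀, ω₀) ∈ K ×ˢ {η : EuclideanSpace ℝ (Fin ν) | η ≠ 0} := ⟨hy₀, hω₀0⟩
      set P₀ : ℝ := ‖p y₀ ω₀‖ with hP
      have hP0 : 0 < P₀ := norm_pos_iff.mpr hp0
      set Q₀ : ℝ := ‖q y₀ ω₀‖ with hQ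
      have hQ0 : 0 ≤ Q₀ := norm_nonneg _
      have hcp : Filter.Tendsto (fun z : EuclideanSpace ℝ (Fin ν) × EuclideanSpace ℝ (Fin ν)
          => ‖p z.1 z.2‖)
          (nhdsWithin (y₀, ω₀) (K ×ˢ {η : EuclideanSpace ℝ (Fin ν) | η ≠ 0})) (nhds P₀) :=
        (continuous_norm.tendsto _).comp (hp.continuousWithinAt hmem)
      have hcq : Filter.Tendsto (fun z : EuclideanSpace ℝ (Fin ν) × EuclideanSpace ℝ (Fin ν)
          => ‖q z.1 z.2‖)
          (nhdsWithin (y₀, ω₀) (K ×ˢ {η : EuclideanSpace ℝ (Fin ν) | η ≠ 0})) (nhds Q₀) :=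
        (continuous_norm.tendsto _).comp (hq.continuousWithinAt hmem)
      have h1 := hcp.eventually (eventually_gt_nhds (by linarith : P₀ / 2 < P₀))
      have h2 := hcq.eventually (eventually_lt_nhds (by linarith : Q₀ < Q₀ + 1))
      obtain ⟨U, hUopen, hUmem, hUsub⟩ := mem_nhdsWithin.mp (h1.and h2)
      set A : ℝ := (Q₀ + 2) / (P₀ / 2) with hA
      have hA0 : 0 < A := by positivity
      refine ⟨U, hUopen.mem_nhds hUmem, 1, one_pos, max 1 (A ^ σ⁻¹), le_max_left _ _, ?_⟩
      intro y hy ω hω hωU l hl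
      have hωne : ω ≠ 0 := by
        intro h; rw [h, norm_zero] at hω; norm_num at hω
      have hP' := (hUsub ⟨hωU, hy, hωne⟩).1
      have hQ' := (hUsub ⟨hωU, hy, hωne⟩).2
      have hl1 : (1:ℝ) ≤ l := le_trans (le_max_left _ _) hl
      have hl0 : (0:ℝ) < l := lt_of_lt_of_le one_pos hl1
      have hls0 : (0:ℝ) ≤ l ^ σ := (Real.rpow_pos_of_pos hl0 σ).le
      have hlA : A ≤ l ^ σ := by
        have h3 : A ^ σ⁻¹ ≤ l := le_trans (le_max_right _ _) hl
        have h4 : (A ^ σ⁻¹) ^ σ ≤ l ^ σ :=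
          Real.rpow_le_rpow (Real.rpow_nonneg hA0.le _) h3 hσ.le
        rwa [Real.rpow_inv_rpow hA0.le hσ.ne'] at h4
      have habs : ‖((l ^ σ : ℝ) : ℂ) * p y ω‖
          = l ^ σ * ‖p y ω‖ := by
        rw [norm_mul, Complex.norm_real, Real.norm_eq_abs, abs_of_nonneg hls0]
      have tri : ‖((l ^ σ : ℝ) : ℂ) * p y ω‖
          ≤ ‖((l ^ σ : ℝ) : ℂ) * p y ω + q y ω‖ + ‖q y ω‖ := by
        have h5 := norm_add_le (((l ^ σ : ℝ) : ℂ) * p y ω + q y ω) (-(q y ω))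
        simpa using h5
      have e1 : A * (P₀ / 2) ≤ l ^ σ * ‖p y ω‖ :=
        mul_le_mul hlA hP'.le (by positivity) hls0
      have hAe : A * (P₀ / 2) = Q₀ + 2 := div_mul_cancel₀ _ (by positivity)
      rw [habs] at tri
      linarith
  choose U hU c hc R hR hprop using key
  obtain ⟨t, ht⟩ := hScomp.elim_nhds_subcover' (fun x hx => U x hx) (fun x hx => hU x hx)
  by_cases htne : t.Nonempty
  · refine ⟨t.inf' htne (fun x => c x x.2), ?_, max 1 (t.sup' htne fun x => R x x.2),
      le_max_left _ _, ?_⟩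
    · exact (Finset.lt_inf'_iff htne).mpr fun x hx => hc x x.2
    · intro y hy η hη
      have hη1 : (1:ℝ) ≤ ‖η‖ := le_trans (le_max_left _ _) hη
      have hη0 : (0:ℝ) < ‖η‖ := lt_of_lt_of_le one_pos hη1
      have hηne : η ≠ 0 := by
        intro h; rw [h, norm_zero] at hη0; exact lt_irrefl _ hη0
      set ω : EuclideanSpace ℝ (Fin ν) := ‖η‖⁻¹ • η with hωdef
      have hωnorm : ‖ω‖ = 1 := by
        rw [hωdef, norm_smul, norm_inv, norm_norm, inv_mul_cancel₀ hη0.ne']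
      have hωne : ω ≠ 0 := by
        intro h; rw [h, norm_zero] at hωnorm; norm_num at hωnorm
      have hωS : (y, ω) ∈ S := ⟨hy, by simpa [mem_sphere_zero_iff_norm] using hωnorm⟩
      obtain ⟨x, hxt, hxU⟩ : ∃ x ∈ t, (y, ω) ∈ U x x.2 := by
        have := ht hωS
        simpa [Set.mem_iUnion] using this
      have hlR : R x x.2 ≤ ‖η‖ := by
        calc R x x.2 ≤ t.sup' htne (fun x => R x x.2) := Finset.le_sup' (fun x : ↥S => R ↑x x.2) hxt
          _ ≤ max 1 (t.sup' htne fun x => R x x.2) := le_max_right _ _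
          _ ≤ ‖η‖ := hη
      have hest := hprop x x.2 y hy ω hωnorm hxU ‖η‖ hlR
      have hη_eq : η = ‖η‖ • ω := (smul_inv_smul₀ hη0.ne' η).symm
      have hpe := hphom y hy ω hωne ‖η‖ hη0
      have hqe := hqhom y hy ω hωne ‖η‖ hη0
      rw [← hη_eq] at hpe hqe
      rw [hpe, hqe]
      have hrm : (‖η‖ : ℝ) ^ m = ‖η‖ ^ (m - σ) * ‖η‖ ^ σ := by
        rw [← Real.rpow_add hη0]; ring_nf
      have hfac : ((‖η‖ ^ m : ℝ) : ℂ) * p y ω + ((‖η‖ ^ (m - σ) : ℝ) : ℂ) * q y ω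
          = ((‖η‖ ^ (m - σ) : ℝ) : ℂ) * (((‖η‖ ^ σ : ℝ) : ℂ) * p y ω + q y ω) := by
        rw [hrm]; push_cast; ring
      rw [hfac, norm_mul, Complex.norm_real, Real.norm_eq_abs,
        abs_of_pos (Real.rpow_pos_of_pos hη0 _), mul_comm]
      refine mul_le_mul_of_nonneg_left ?_ (Real.rpow_nonneg hη0.le _)
      exact le_trans (Finset.inf'_le _ hxt) hest
  · refine ⟨1, one_pos, 1, le_refl 1, ?_⟩
    intro y hy η hη
    exfalso
    have hη0 : (0:ℝ) < ‖η‖ := lt_of_lt_of_le one_pos hη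
    set ω : EuclideanSpace ℝ (Fin ν) := ‖η‖⁻¹ • η with hωdef
    have hωnorm : ‖ω‖ = 1 := by
      rw [hωdef, norm_smul, norm_inv, norm_norm, inv_mul_cancel₀ hη0.ne']
    have hωS : (y, ω) ∈ S := ⟨hy, by simpa [mem_sphere_zero_iff_norm] using hωnorm⟩
    obtain ⟨x, hxt, _⟩ : ∃ x ∈ t, (y, ω) ∈ U x x.2 := by
      have := ht hωS
      simpa [Set.mem_iUnion] using this
    exact htne ⟨x, hxt⟩
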